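/- With the notation of the bi-Lipschitz gluing map φ: if a ∈ S_k and b ∈ S_i with k ≥ i+2 and ‖a‖ ≥ ‖b‖, then ‖a‖/2 ≤ ‖φ(a)−φ(b)‖ ≤ ‖a‖+‖b‖, and also ‖a‖/2 ≤ ‖a−b‖ ≤ 2‖a‖; consequently (1/4)‖a−b‖ ≤ ‖φ(a)−φ(b)‖ ≤ 4‖a−b‖. -/

import Mathlib

/-- Distant-shells case of the gluing map: if `a ∈ S_k` and `b ∈ S_i` with
`k ≥ i+2` and `‖a‖ ≥ ‖b‖`, then `‖a‖/2 ≤ ‖φ(a)−φ(b)‖ ≤ ‖a‖+‖b‖` and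
`‖a‖/2 ≤ ‖a−b‖ ≤ 2‖a‖`; consequently
`(1/4)‖a−b‖ ≤ ‖φ(a)−φ(b)‖ ≤ 4‖a−b‖`. -/
theorem gluing_distant_shells {Z Y : Type*}
    [NormedAddCommGroup Z] [NormedSpace ℝ Z] [CompleteSpace Z]
    [NormedAddCommGroup Y] [NormedSpace ℝ Y] [CompleteSpace Y]
    (A : Set Z) (hA : ∀ r : ℝ, (A ∩ Metric.closedBall 0 r).Finite)
    (Zsub : ℤ → Submodule ℝ Z)
    (hZsub : ∀ i : ℤ, Zsub i = Submodule.span ℝ {a : Z | a ∈ A ∧ ‖a‖ ≤ (2:ℝ) ^ i})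
    (Ysub : ℤ → Submodule ℝ Y)
    (hmono : ∀ y : ℤ → Y, (∀ i, y i ∈ Ysub i) → Summable y →
      ∀ j : ℤ, ‖y j‖ ≤ ‖∑' i, y i‖)
    (E : ∀ i : ℤ, (Zsub i) →ₗ[ℝ] Y)
    (hEiso : ∀ (i : ℤ) (z : Zsub i), ‖E i z‖ = ‖(z : Z)‖)
    (hErange : ∀ (i : ℤ) (z : Zsub i), E i z ∈ Ysub i)
    (φ : Z → Y) (a b : Z) (haA : a ∈ A) (hbA : b ∈ A)
    (i k : ℤ) (hik : i + 2 ≤ k)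
    (hb1 : (2:ℝ) ^ (i - 1) ≤ ‖b‖) (hb2 : ‖b‖ ≤ (2:ℝ) ^ i)
    (ha1 : (2:ℝ) ^ (k - 1) ≤ ‖a‖) (ha2 : ‖a‖ ≤ (2:ℝ) ^ k)
    (hba : ‖b‖ ≤ ‖a‖)
    (haZ : a ∈ Zsub k) (haZ' : a ∈ Zsub (k + 1))
    (hbZ : b ∈ Zsub i) (hbZ' : b ∈ Zsub (i + 1))
    (hφa : φ a = (((2:ℝ) ^ k - ‖a‖) / (2:ℝ) ^ (k - 1)) • E k ⟨a, haZ⟩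
        + ((‖a‖ - (2:ℝ) ^ (k - 1)) / (2:ℝ) ^ (k - 1)) • E (k + 1) ⟨a, haZ'⟩)
    (hφb : φ b = (((2:ℝ) ^ i - ‖b‖) / (2:ℝ) ^ (i - 1)) • E i ⟨b, hbZ⟩
        + ((‖b‖ - (2:ℝ) ^ (i - 1)) / (2:ℝ) ^ (i - 1)) • E (i + 1) ⟨b, hbZ'⟩) :
    (‖a‖ / 2 ≤ ‖φ a - φ b‖ ∧ ‖φ a - φ b‖ ≤ ‖a‖ + ‖b‖) ∧
    (‖a‖ / 2 ≤ ‖a - b‖ ∧ ‖a - b‖ ≤ 2 * ‖a‖) ∧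
    ((1 / 4) * ‖a - b‖ ≤ ‖φ a - φ b‖ ∧ ‖φ a - φ b‖ ≤ 4 * ‖a - b‖) := by
  have hP : (0:ℝ) < (2:ℝ) ^ (k - 1) := by positivity
  have hQ : (0:ℝ) < (2:ℝ) ^ (i - 1) := by positivity
  have h2k : (2:ℝ) ^ k = 2 * (2:ℝ) ^ (k - 1) := by
    rw [show k = (k - 1) + 1 by ring, zpow_add_one₀ (by norm_num : (2:ℝ) ≠ 0)]; ring
  have h2i : (2:ℝ) ^ i = 2 * (2:ℝ) ^ (i - 1) := by
    rw [show i = (i - 1) + 1 by ring, zpow_add_one₀ (by norm_num : (2:ℝ) ≠ 0)]; ring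
  set c1 : ℝ := ((2:ℝ) ^ k - ‖a‖) / (2:ℝ) ^ (k - 1) with hc1
  set c2 : ℝ := (‖a‖ - (2:ℝ) ^ (k - 1)) / (2:ℝ) ^ (k - 1) with hc2
  set d1 : ℝ := ((2:ℝ) ^ i - ‖b‖) / (2:ℝ) ^ (i - 1) with hd1
  set d2 : ℝ := (‖b‖ - (2:ℝ) ^ (i - 1)) / (2:ℝ) ^ (i - 1) with hd2
  have hc1n : 0 ≤ c1 := div_nonneg (by linarith) hP.le
  have hc2n : 0 ≤ c2 := div_nonneg (by linarith) hP.le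
  have hd1n : 0 ≤ d1 := div_nonneg (by linarith) hQ.le
  have hd2n : 0 ≤ d2 := div_nonneg (by linarith) hQ.le
  have hc12 : c1 + c2 = 1 := by
    rw [hc1, hc2, ← add_div, h2k,
      show (2:ℝ) * 2 ^ (k-1) - ‖a‖ + (‖a‖ - 2 ^ (k-1)) = 2 ^ (k-1) by ring]
    exact div_self hP.ne'
  have hd12 : d1 + d2 = 1 := by
    rw [hd1, hd2, ← add_div, h2i,
      show (2:ℝ) * 2 ^ (i-1) - ‖b‖ + (‖b‖ - 2 ^ (i-1)) = 2 ^ (i-1) by ring]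
    exact div_self hQ.ne'
  -- the finitely supported family
  set y : ℤ → Y := fun j =>
    if j = k then c1 • E k ⟨a, haZ⟩
    else if j = k + 1 then c2 • E (k + 1) ⟨a, haZ'⟩
    else if j = i then -(d1 • E i ⟨b, hbZ⟩)
    else if j = i + 1 then -(d2 • E (i + 1) ⟨b, hbZ'⟩)
    else 0 with hy
  have hmem : ∀ j, y j ∈ Ysub j := by
    intro j
    by_cases h1 : j = k
    · subst h1; simp only [hy, if_pos rfl]; exact Submodule.smul_mem _ _ (hErange _ _)
    by_cases h2 : j = k + 1
    · subst h2; simp only [hy, if_neg (by omega : k + 1 ≠ k), if_pos rfl]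
      exact Submodule.smul_mem _ _ (hErange _ _)
    by_cases h3 : j = i
    · subst h3
      simp only [hy, if_neg h1, if_neg h2, if_pos rfl]
      exact Submodule.neg_mem _ (Submodule.smul_mem _ _ (hErange _ _))
    by_cases h4 : j = i + 1
    · subst h4
      simp only [hy, if_neg h1, if_neg h2, if_neg (by omega : i + 1 ≠ i), if_pos rfl]
      exact Submodule.neg_mem _ (Submodule.smul_mem _ _ (hErange _ _))
    · simp only [hy, if_neg h1, if_neg h2, if_neg h3, if_neg h4]
      exact Submodule.zero_mem _
  have hsupp : ∀ j ∉ ({i, i + 1, k, k + 1} : Finset ℤ), y j = 0 := by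
    intro j hj
    simp only [Finset.mem_insert, Finset.mem_singleton, not_or] at hj
    simp only [hy, if_neg hj.2.2.1, if_neg hj.2.2.2, if_neg hj.1, if_neg hj.2.1]
  have hsummable : Summable y := summable_of_ne_finset_zero hsupp
  have htsum : ∑' j, y j = φ a - φ b := by
    rw [tsum_eq_sum hsupp]
    have e1 : (i:ℤ) ∉ ({i + 1, k, k + 1} : Finset ℤ) := by simp; omega
    have e2 : (i + 1 : ℤ) ∉ ({k, k + 1} : Finset ℤ) := by simp; omega
    have e3 : (k:ℤ) ∉ ({k + 1} : Finset ℤ) := by simp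
    rw [Finset.sum_insert e1, Finset.sum_insert e2, Finset.sum_insert e3,
      Finset.sum_singleton]
    have v1 : y i = -(d1 • E i ⟨b, hbZ⟩) := by
      simp only [hy]
      rw [if_neg (by omega : ¬ i = k), if_neg (by omega : ¬ i = k + 1)]; simp
    have v2 : y (i + 1) = -(d2 • E (i + 1) ⟨b, hbZ'⟩) := by
      simp only [hy]
      rw [if_neg (by omega : ¬ i + 1 = k), if_neg (by omega : ¬ i + 1 = k + 1),
        if_neg (by omega : ¬ i + 1 = i)]; simp
    have v3 : y k = c1 • E k ⟨a, haZ⟩ := by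
      simp only [hy]; simp
    have v4 : y (k + 1) = c2 • E (k + 1) ⟨a, haZ'⟩ := by
      simp only [hy]; rw [if_neg (by omega : ¬ k + 1 = k)]; simp
    rw [v1, v2, v3, v4, hφa, hφb]; abel
  have hnk : ‖y k‖ = c1 * ‖a‖ := by
    simp only [hy]
    rw [if_pos trivial, norm_smul, Real.norm_eq_abs, abs_of_nonneg hc1n, hEiso]
  have hnk' : ‖y (k + 1)‖ = c2 * ‖a‖ := by
    simp only [hy]
    rw [if_neg (by omega : ¬ k + 1 = k), if_pos trivial, norm_smul, Real.norm_eq_abs,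
      abs_of_nonneg hc2n, hEiso]
  have hm1 := hmono y hmem hsummable k
  have hm2 := hmono y hmem hsummable (k + 1)
  rw [htsum, hnk] at hm1
  rw [htsum, hnk'] at hm2
  have hlow : ‖a‖ / 2 ≤ ‖φ a - φ b‖ := by nlinarith [norm_nonneg a]
  -- upper bound
  have hφan : ‖φ a‖ ≤ ‖a‖ := by
    rw [hφa]
    calc ‖c1 • E k ⟨a, haZ⟩ + c2 • E (k+1) ⟨a, haZ'⟩‖
        ≤ ‖c1 • E k ⟨a, haZ⟩‖ + ‖c2 • E (k+1) ⟨a, haZ'⟩‖ := norm_add_le _ _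
      _ = c1 * ‖a‖ + c2 * ‖a‖ := by
          rw [norm_smul, norm_smul, Real.norm_eq_abs, Real.norm_eq_abs,
            abs_of_nonneg hc1n, abs_of_nonneg hc2n, hEiso, hEiso]
      _ = ‖a‖ := by rw [← add_mul, hc12, one_mul]
  have hφbn : ‖φ b‖ ≤ ‖b‖ := by
    rw [hφb]
    calc ‖d1 • E i ⟨b, hbZ⟩ + d2 • E (i+1) ⟨b, hbZ'⟩‖
        ≤ ‖d1 • E i ⟨b, hbZ⟩‖ + ‖d2 • E (i+1) ⟨b, hbZ'⟩‖ := norm_add_le _ _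
      _ = d1 * ‖b‖ + d2 * ‖b‖ := by
          rw [norm_smul, norm_smul, Real.norm_eq_abs, Real.norm_eq_abs,
            abs_of_nonneg hd1n, abs_of_nonneg hd2n, hEiso, hEiso]
      _ = ‖b‖ := by rw [← add_mul, hd12, one_mul]
  have hupp : ‖φ a - φ b‖ ≤ ‖a‖ + ‖b‖ :=
    le_trans (norm_sub_le _ _) (add_le_add hφan hφbn)
  -- ‖a - b‖ bounds
  have h2ik : (2:ℝ) ^ i ≤ (2:ℝ) ^ (k - 1) / 2 := by
    rw [show (k:ℤ) - 1 = (k - 2) + 1 by ring, zpow_add_one₀ (by norm_num : (2:ℝ) ≠ 0)]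
    have : (2:ℝ) ^ i ≤ (2:ℝ) ^ (k - 2) :=
      zpow_le_zpow_right₀ (by norm_num) (by omega)
    linarith
  have hab_low : ‖a‖ / 2 ≤ ‖a - b‖ := by
    have habs : ‖a‖ - ‖b‖ ≤ ‖a - b‖ := norm_sub_norm_le a b
    linarith
  have hab_upp : ‖a - b‖ ≤ 2 * ‖a‖ := le_trans (norm_sub_le _ _) (by linarith)
  refine ⟨⟨hlow, hupp⟩, ⟨hab_low, hab_upp⟩, ?_, ?_⟩
  · linarith
  · linarith
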